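/- Let $r>0$ and let $(r_n)$ and $(s_n)$ be real sequences with $s_n>0$ for all $n$, such that the power series $R(x)=\sum_{n=0}^\infty r_n x^n$ and $S(x)=\sum_{n=0}^\infty s_n x^n$ converge for $|x|<r$. If the sequence $(r_n/s_n)$ is non-constant and monotonically increasing, then the function $x \mapsto R(x)/S(x)$ is strictly increasing on $(0,r)$. -/
import Mathlib

open Filter

private lemma abs_summable_aux (r : ℝ) (a : ℕ → ℝ)
    (h : ∀ x : ℝ, |x| < r → Summable (fun n => a n * x ^ n))
    (x : ℝ) (hx : |x| < r) : Summable (fun n => ‖a n * x ^ n‖) := by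
  have hx0 : (0:ℝ) ≤ |x| := abs_nonneg x
  set t := (|x| + r) / 2 with ht
  have ht0 : 0 < t := by simp only [ht]; linarith
  have hxt : |x| < t := by simp only [ht]; linarith
  have htr : t < r := by simp only [ht]; linarith
  have hst : Summable (fun n => a n * t ^ n) := h t (by rwa [abs_of_pos ht0])
  have hb : BddAbove (Set.range fun n => |a n * t ^ n|) :=
    (hst.tendsto_atTop_zero.abs).bddAbove_range
  obtain ⟨C, hC⟩ := hb
  have hC' : ∀ n, |a n| * t ^ n ≤ C := by
    intro n
    have := hC (Set.mem_range_self n)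
    rwa [abs_mul, abs_of_pos (pow_pos ht0 n)] at this
  have hlt1 : |x| / t < 1 := by rw [div_lt_one ht0]; exact hxt
  have hgeo : Summable (fun n : ℕ => C * (|x| / t) ^ n) :=
    (summable_geometric_of_lt_one (by positivity) hlt1).mul_left C
  refine Summable.of_nonneg_of_le (fun n => by positivity) (fun n => ?_) hgeo
  have h1 : ‖a n * x ^ n‖ = (|a n| * t ^ n) * (|x| / t) ^ n := by
    rw [Real.norm_eq_abs, abs_mul, abs_pow, mul_assoc, ← mul_pow,
      mul_div_cancel₀ _ ht0.ne']
  rw [h1]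
  exact mul_le_mul_of_nonneg_right (hC' n) (by positivity)

set_option maxHeartbeats 1000000 in
theorem quotient_of_power_series_strictMono
    (r : ℝ) (hr : 0 < r) (rs ss : ℕ → ℝ) (hs : ∀ n, 0 < ss n)
    (hR : ∀ x : ℝ, |x| < r → Summable (fun n => rs n * x ^ n))
    (hS : ∀ x : ℝ, |x| < r → Summable (fun n => ss n * x ^ n))
    (hmono : Monotone (fun n => rs n / ss n))
    (hnonconst : ∃ m n, rs m / ss m ≠ rs n / ss n) :
    StrictMonoOn (fun x : ℝ => (∑' n : ℕ, rs n * x ^ n) / (∑' n : ℕ, ss n * x ^ n))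
      (Set.Ioo 0 r) := by
  have hSpos : ∀ x ∈ Set.Ioo (0:ℝ) r, 0 < ∑' n, ss n * x ^ n := by
    intro x hx
    have hxr : |x| < r := by rw [abs_of_pos hx.1]; exact hx.2
    exact Summable.tsum_pos (hS x hxr) (fun n => (mul_pos (hs n) (pow_pos hx.1 n)).le) 0
      (mul_pos (hs 0) (pow_pos hx.1 0))
  intro x hx y hy hxy
  have hxr : |x| < r := by rw [abs_of_pos hx.1]; exact hx.2
  have hyr : |y| < r := by rw [abs_of_pos hy.1]; exact hy.2
  have hRx := abs_summable_aux r rs hR x hxr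
  have hRy := abs_summable_aux r rs hR y hyr
  have hSx := abs_summable_aux r ss hS x hxr
  have hSy := abs_summable_aux r ss hS y hyr
  -- product expansions
  set F1 : ℕ × ℕ → ℝ := fun p => (rs p.1 * x ^ p.1) * (ss p.2 * y ^ p.2) with hF1
  set F2 : ℕ × ℕ → ℝ := fun p => (rs p.1 * y ^ p.1) * (ss p.2 * x ^ p.2) with hF2
  have hsum1 : Summable F1 := summable_mul_of_summable_norm hRx hSy
  have hsum2 : Summable F2 := summable_mul_of_summable_norm hRy hSx
  have he1 : (∑' n : ℕ, rs n * x ^ n) * (∑' n : ℕ, ss n * y ^ n) = ∑' p : ℕ × ℕ, F1 p :=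
    tsum_mul_tsum_of_summable_norm hRx hSy
  have he2 : (∑' n : ℕ, rs n * y ^ n) * (∑' n : ℕ, ss n * x ^ n) = ∑' p : ℕ × ℕ, F2 p :=
    tsum_mul_tsum_of_summable_norm hRy hSx
  set F : ℕ × ℕ → ℝ := fun p => F1 p - F2 p with hF
  have hsumF : Summable F := hsum1.sub hsum2
  have heF : ∑' p, F p = (∑' n : ℕ, rs n * x ^ n) * (∑' n : ℕ, ss n * y ^ n)
      - (∑' n : ℕ, rs n * y ^ n) * (∑' n : ℕ, ss n * x ^ n) := by
    rw [he1, he2, Summable.tsum_sub hsum1 hsum2]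
  -- swap symmetrization
  have hsumFs : Summable (fun p : ℕ × ℕ => F p.swap) := hsumF.prod_symm
  have heFs : ∑' p : ℕ × ℕ, F p.swap = ∑' p, F p := (Equiv.prodComm ℕ ℕ).tsum_eq F
  set K : ℕ × ℕ → ℝ := fun p => F p + F p.swap with hK
  have hsumK : Summable K := hsumF.add hsumFs
  have heK : ∑' p, K p = 2 * ∑' p, F p := by
    rw [hK]
    rw [Summable.tsum_add hsumF hsumFs, heFs]
    ring
  -- key: K p = (rs m * ss n - rs n * ss m) * (x^m * y^n - x^n * y^m)
  have hKform : ∀ p : ℕ × ℕ, K p = (rs p.1 * ss p.2 - rs p.2 * ss p.1) *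
      (x ^ p.1 * y ^ p.2 - x ^ p.2 * y ^ p.1) := by
    intro p
    simp only [hK, hF, hF1, hF2, Prod.fst_swap, Prod.snd_swap]
    ring
  -- sign facts
  have hcross : ∀ m n : ℕ, m ≤ n → rs m * ss n ≤ rs n * ss m := fun m n hmn =>
    (div_le_div_iff₀ (hs m) (hs n)).1 (hmono hmn)
  have hpow : ∀ m n : ℕ, m ≤ n → x ^ n * y ^ m ≤ x ^ m * y ^ n := by
    intro m n hmn
    obtain ⟨k, rfl⟩ := Nat.exists_eq_add_of_le hmn
    rw [pow_add, pow_add]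
    have hxk : x ^ k ≤ y ^ k := pow_le_pow_left₀ hx.1.le hxy.le k
    calc x ^ m * x ^ k * y ^ m = (x ^ m * y ^ m) * x ^ k := by ring
      _ ≤ (x ^ m * y ^ m) * y ^ k :=
        mul_le_mul_of_nonneg_left hxk (mul_nonneg (pow_nonneg hx.1.le m) (pow_nonneg hy.1.le m))
      _ = x ^ m * (y ^ m * y ^ k) := by ring
  have hKle : ∀ p : ℕ × ℕ, K p ≤ (0:ℝ) := by
    intro ⟨m, n⟩
    rw [hKform]
    rcases le_total m n with hmn | hnm
    · exact mul_nonpos_of_nonpos_of_nonneg (by simpa using sub_nonpos.2 (hcross m n hmn))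
        (sub_nonneg.2 (hpow m n hmn))
    · rw [show (rs m * ss n - rs n * ss m) * (x ^ m * y ^ n - x ^ n * y ^ m)
        = (rs n * ss m - rs m * ss n) * (x ^ n * y ^ m - x ^ m * y ^ n) by ring]
      exact mul_nonpos_of_nonpos_of_nonneg (by simpa using sub_nonpos.2 (hcross n m hnm))
        (sub_nonneg.2 (hpow n m hnm))
  -- strict term
  obtain ⟨a, b, hab⟩ := hnonconst
  have hstrict : ∃ m n : ℕ, m < n ∧ rs m / ss m < rs n / ss n := by
    rcases lt_trichotomy a b with h | h | h
    · exact ⟨a, b, h, lt_of_le_of_ne (hmono h.le) hab⟩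
    · exact absurd (by rw [h]) hab
    · exact ⟨b, a, h, lt_of_le_of_ne (hmono h.le) (Ne.symm hab)⟩
  obtain ⟨m, n, hmn, hqlt⟩ := hstrict
  have hKlt : K (m, n) < 0 := by
    rw [hKform]
    have hA : rs m * ss n - rs n * ss m < 0 :=
      sub_neg.2 ((div_lt_div_iff₀ (hs m) (hs n)).1 hqlt)
    have hB : 0 < x ^ m * y ^ n - x ^ n * y ^ m := by
      rw [sub_pos]
      obtain ⟨k, rfl⟩ := Nat.exists_eq_add_of_lt hmn
      have hxk : x ^ (k + 1) < y ^ (k + 1) :=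
        pow_lt_pow_left₀ hxy hx.1.le (Nat.succ_ne_zero k)
      calc x ^ (m + k + 1) * y ^ m = (x ^ m * y ^ m) * x ^ (k + 1) := by
            rw [show m + k + 1 = m + (k + 1) from by ring, pow_add]; ring
        _ < (x ^ m * y ^ m) * y ^ (k + 1) :=
          mul_lt_mul_of_pos_left hxk (mul_pos (pow_pos hx.1 m) (pow_pos hy.1 m))
        _ = x ^ m * y ^ (m + k + 1) := by
            rw [show m + k + 1 = m + (k + 1) from by ring, pow_add]; ring
    exact mul_neg_of_neg_of_pos hA hB
  have hKsum_neg : ∑' p, K p < 0 := by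
    have := Summable.tsum_lt_tsum (g := fun _ : ℕ × ℕ => (0:ℝ)) hKle hKlt hsumK summable_zero
    simpa using this
  have hFneg : ∑' p, F p < 0 := by linarith [heK ▸ hKsum_neg]
  have hprod : (∑' n : ℕ, rs n * x ^ n) * (∑' n : ℕ, ss n * y ^ n)
      < (∑' n : ℕ, rs n * y ^ n) * (∑' n : ℕ, ss n * x ^ n) := by
    rw [heF] at hFneg; linarith
  exact (div_lt_div_iff₀ (hSpos x hx) (hSpos y hy)).2 hprod
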